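/- Let U ⊆ ℝ² be open, let Δ_r : ℝ → ℝ and Δ_θ : ℝ → ℝ be differentiable, let g : U → ℝ be continuously differentiable, let ω : U → ℝ be twice continuously differentiable, and suppose that g(r,p)·Δ_r(r)·Δ_θ(p) > 0 for all (r,p) ∈ U; set Ψ(r,p) := √(g(r,p)·Δ_r(r)·Δ_θ(p)). Suppose Φ : U → ℝ is differentiable with ∂_r Φ = g·Δ_θ·∂_p ω and ∂_p Φ = −g·Δ_r·∂_r ω on U. Then at every point of U: Ψ·(∂_r(Δ_r·∂_r Φ) + ∂_p(Δ_θ·∂_p Φ)) = 2Δ_r·(∂_rΨ)(∂_rΦ) + 2Δ_θ·(∂_pΨ)(∂_pΦ). -/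

import Mathlib

open Real

/-- Partial derivative in the first (radial) coordinate. -/
noncomputable def pderivR (F : ℝ × ℝ → ℝ) (x : ℝ × ℝ) : ℝ :=
  deriv (fun s : ℝ => F (s, x.2)) x.1

/-- Partial derivative in the second (angular) coordinate. -/
noncomputable def pderivP (F : ℝ × ℝ → ℝ) (x : ℝ × ℝ) : ℝ :=
  deriv (fun t : ℝ => F (x.1, t)) x.2

set_option maxHeartbeats 1000000

lemma sliceR {F : ℝ × ℝ → ℝ} {a b : ℝ} (h : DifferentiableAt ℝ F (a, b)) :
    HasDerivAt (fun s => F (s, b)) (fderiv ℝ F (a, b) (1, 0)) a := by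
  have h1 : HasDerivAt (fun s : ℝ => (s, b)) ((1 : ℝ), (0 : ℝ)) a :=
    HasDerivAt.prodMk (hasDerivAt_id a) (hasDerivAt_const _ _)
  exact h.hasFDerivAt.comp_hasDerivAt a h1

lemma sliceP {F : ℝ × ℝ → ℝ} {a b : ℝ} (h : DifferentiableAt ℝ F (a, b)) :
    HasDerivAt (fun t => F (a, t)) (fderiv ℝ F (a, b) (0, 1)) b := by
  have h1 : HasDerivAt (fun t : ℝ => (a, t)) ((0 : ℝ), (1 : ℝ)) b :=
    HasDerivAt.prodMk (hasDerivAt_const _ _) (hasDerivAt_id b)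
  exact h.hasFDerivAt.comp_hasDerivAt b h1

lemma pderivR_eq {F : ℝ × ℝ → ℝ} {a b : ℝ} (h : DifferentiableAt ℝ F (a, b)) :
    pderivR F (a, b) = fderiv ℝ F (a, b) (1, 0) := (sliceR h).deriv

lemma pderivP_eq {F : ℝ × ℝ → ℝ} {a b : ℝ} (h : DifferentiableAt ℝ F (a, b)) :
    pderivP F (a, b) = fderiv ℝ F (a, b) (0, 1) := (sliceP h).deriv

lemma pderivR_congr {F G : ℝ × ℝ → ℝ} {a b : ℝ} (h : F =ᶠ[nhds (a, b)] G) :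
    pderivR F (a, b) = pderivR G (a, b) := by
  apply Filter.EventuallyEq.deriv_eq
  exact h.comp_tendsto ((Continuous.tendsto (continuous_id.prodMk continuous_const) a))

lemma pderivP_congr {F G : ℝ × ℝ → ℝ} {a b : ℝ} (h : F =ᶠ[nhds (a, b)] G) :
    pderivP F (a, b) = pderivP G (a, b) := by
  apply Filter.EventuallyEq.deriv_eq
  exact h.comp_tendsto ((Continuous.tendsto (continuous_const.prodMk continuous_id) b))

/-- If `Ψ = √(g·Δ_r·Δ_θ)` and `Φ` is a twist potential for `ω`
(`∂_r Φ = g·Δ_θ·∂_p ω`, `∂_p Φ = −g·Δ_r·∂_r ω`), then the first real Ernst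
equation `Ψ·(∂_r(Δ_r∂_rΦ) + ∂_p(Δ_θ∂_pΦ)) = 2Δ_r(∂_rΨ)(∂_rΦ) + 2Δ_θ(∂_pΨ)(∂_pΦ)`
holds identically on `U`. -/
theorem stmt_12 (U : Set (ℝ × ℝ)) (hU : IsOpen U)
    (Δr Δθ : ℝ → ℝ) (hΔr : Differentiable ℝ Δr) (hΔθ : Differentiable ℝ Δθ)
    (g : ℝ × ℝ → ℝ) (hg : ContDiffOn ℝ 1 g U)
    (ω : ℝ × ℝ → ℝ) (hω : ContDiffOn ℝ 2 ω U)
    (hpos : ∀ x ∈ U, 0 < g x * Δr x.1 * Δθ x.2)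
    (Ψ : ℝ × ℝ → ℝ) (hΨ : ∀ x : ℝ × ℝ, Ψ x = Real.sqrt (g x * Δr x.1 * Δθ x.2))
    (Φ : ℝ × ℝ → ℝ) (hΦdiff : ∀ x ∈ U, DifferentiableAt ℝ Φ x)
    (hΦr : ∀ x ∈ U, pderivR Φ x = g x * Δθ x.2 * pderivP ω x)
    (hΦp : ∀ x ∈ U, pderivP Φ x = -(g x * Δr x.1 * pderivR ω x)) :
    ∀ x ∈ U,
      Ψ x * (pderivR (fun y => Δr y.1 * pderivR Φ y) x
          + pderivP (fun y => Δθ y.2 * pderivP Φ y) x)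
        = 2 * Δr x.1 * pderivR Ψ x * pderivR Φ x
          + 2 * Δθ x.2 * pderivP Ψ x * pderivP Φ x := by
  rintro ⟨a, b⟩ hx
  set q : ℝ × ℝ → ℝ := fun y => g y * Δr y.1 * Δθ y.2 with hq
  have hUx : U ∈ nhds (a, b) := hU.mem_nhds hx
  -- differentiability of g and q on U
  have hgd : ∀ y ∈ U, DifferentiableAt ℝ g y := fun y hy =>
    ((hg.differentiableOn one_ne_zero).differentiableAt (hU.mem_nhds hy))
  have hqd : ∀ y ∈ U, DifferentiableAt ℝ q y := by
    intro y hy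
    exact ((hgd y hy).mul ((hΔr y.1).comp y differentiableAt_fst)).mul
      ((hΔθ y.2).comp y differentiableAt_snd)
  -- differentiability of ω on U
  have hωd : ∀ y ∈ U, DifferentiableAt ℝ ω y := fun y hy =>
    ((hω.differentiableOn (by norm_num)).differentiableAt (hU.mem_nhds hy))
  -- second derivative data
  set W : ℝ × ℝ → (ℝ × ℝ →L[ℝ] ℝ) := fderiv ℝ ω with hWdef
  have hω2 : ContDiffAt ℝ 2 ω (a, b) := hω.contDiffAt hUx
  have hW1 : ContDiffAt ℝ 1 W (a, b) := hω2.fderiv_right (by norm_num)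
  have hWd : DifferentiableAt ℝ W (a, b) := hW1.differentiableAt one_ne_zero
  set f'' := fderiv ℝ W (a, b) with hf''
  have hsymm : ∀ v w : ℝ × ℝ, f'' v w = f'' w v := by
    intro v w
    apply second_derivative_symmetric_of_eventually (f := ω) ?_ hWd.hasFDerivAt
    filter_upwards [hUx] with y hy using (hωd y hy).hasFDerivAt
  -- evaluated directional second-derivative functions
  set Pf : ℝ × ℝ → ℝ := fun y => W y ((0 : ℝ), (1 : ℝ)) with hPf
  set Rf : ℝ × ℝ → ℝ := fun y => W y ((1 : ℝ), (0 : ℝ)) with hRf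
  have hPfd : DifferentiableAt ℝ Pf (a, b) := hWd.clm_apply (differentiableAt_const _)
  have hRfd : DifferentiableAt ℝ Rf (a, b) := hWd.clm_apply (differentiableAt_const _)
  have hfderivPf : fderiv ℝ Pf (a, b) = (f'').flip ((0 : ℝ), (1 : ℝ)) := by
    rw [hPf, fderiv_clm_apply hWd (differentiableAt_const _)]
    simp; rfl
  have hfderivRf : fderiv ℝ Rf (a, b) = (f'').flip ((1 : ℝ), (0 : ℝ)) := by
    rw [hRf, fderiv_clm_apply hWd (differentiableAt_const _)]
    simp; rfl
  -- pderiv of ω equals Pf, Rf on U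
  have hPω : ∀ y ∈ U, pderivP ω y = Pf y := fun y hy => by
    obtain ⟨c, d⟩ := y; exact pderivP_eq (hωd _ hy)
  have hRω : ∀ y ∈ U, pderivR ω y = Rf y := fun y hy => by
    obtain ⟨c, d⟩ := y; exact pderivR_eq (hωd _ hy)
  -- abbreviations at the point
  have hxq : DifferentiableAt ℝ q (a, b) := hqd _ hx
  set Qr := fderiv ℝ q (a, b) ((1 : ℝ), (0 : ℝ)) with hQr
  set Qp := fderiv ℝ q (a, b) ((0 : ℝ), (1 : ℝ)) with hQp
  set P := Pf (a, b) with hPdef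
  set R := Rf (a, b) with hRdef
  set M := f'' ((1 : ℝ), (0 : ℝ)) ((0 : ℝ), (1 : ℝ)) with hM
  have q0pos : 0 < q (a, b) := hpos _ hx
  -- Step 1 : rewrite the two divergence terms
  have hev1 : (fun y => Δr y.1 * pderivR Φ y) =ᶠ[nhds (a, b)] fun y => q y * Pf y := by
    filter_upwards [hUx] with y hy
    rw [hΦr y hy, hPω y hy]; ring
  have hev2 : (fun y => Δθ y.2 * pderivP Φ y) =ᶠ[nhds (a, b)] fun y => -(q y * Rf y) := by
    filter_upwards [hUx] with y hy
    rw [hΦp y hy, hRω y hy]; ring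
  -- Step 2 : compute the derivatives of q·Pf and -(q·Rf)
  have hD1 : pderivR (fun y => q y * Pf y) (a, b) = Qr * P + q (a, b) * M := by
    have := (sliceR hxq).mul (sliceR hPfd)
    rw [pderivR]
    show deriv ((fun s => q (s, b)) * fun s => Pf (s, b)) a = _
    rw [this.deriv, hfderivPf]
    simp only [ContinuousLinearMap.flip_apply]
    rfl
  have hD2 : pderivP (fun y => -(q y * Rf y)) (a, b)
      = -(Qp * R + q (a, b) * M) := by
    have := ((sliceP hxq).mul (sliceP hRfd)).neg
    rw [pderivP]
    show deriv (-((fun t => q (a, t)) * fun t => Rf (a, t))) b = _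
    rw [this.deriv, hfderivRf]
    have h0 : f'' ((0 : ℝ), (1 : ℝ)) ((1 : ℝ), (0 : ℝ)) = M := (hsymm _ _)
    simp only [ContinuousLinearMap.flip_apply, h0]
    rfl
  -- Step 3 : derivatives of Ψ
  have hΨfun : Ψ = fun y => Real.sqrt (q y) := funext hΨ
  have hΨR : pderivR Ψ (a, b) = Qr / (2 * Real.sqrt (q (a, b))) := by
    rw [hΨfun, pderivR]
    exact ((sliceR hxq).sqrt q0pos.ne').deriv
  have hΨP : pderivP Ψ (a, b) = Qp / (2 * Real.sqrt (q (a, b))) := by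
    rw [hΨfun, pderivP]
    exact ((sliceP hxq).sqrt q0pos.ne').deriv
  -- Step 4 : assemble
  rw [pderivR_congr hev1, pderivP_congr hev2, hD1, hD2, hΨR, hΨP, hΨ (a, b),
    hΦr _ hx, hΦp _ hx, hPω _ hx, hRω _ hx]
  have hs : Real.sqrt (g (a, b) * Δr a * Δθ b) ^ 2 = g (a, b) * Δr a * Δθ b :=
    Real.sq_sqrt q0pos.le
  have hsne : Real.sqrt (g (a, b) * Δr a * Δθ b) ≠ 0 :=
    (Real.sqrt_pos.mpr q0pos).ne'
  have hqab : q (a, b) = g (a, b) * Δr a * Δθ b := rfl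
  rw [hqab]
  field_simp
  linear_combination (Qr * P - Qp * R) * hs
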